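/- Let G be a finite insoluble group. If some vertex x of the solubility graph Γ_S(G) has degree p - 1 for a prime p, then R(G) = 1. -/

import Mathlib

open Subgroup

/-- The soluble radical of a group: the join of all soluble normal subgroups. -/
def solRadical (G : Type*) [Group G] : Subgroup G :=
  sSup {N : Subgroup G | N.Normal ∧ IsSolvable N}

instance solRadical_normal {G : Type*} [Group G] : (solRadical G).Normal := by
  constructor
  intro n hn g
  have h : solRadical G ≤ (solRadical G).comap (MulAut.conj g).toMonoidHom := by
    apply sSup_le
    rintro N ⟨hnorm, hsol⟩ x hx
    simp only [Subgroup.mem_comap, MulEquiv.coe_toMonoidHom, MulAut.conj_apply]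
    exact le_sSup (s := {N : Subgroup G | N.Normal ∧ IsSolvable N}) ⟨hnorm, hsol⟩
      (hnorm.conj_mem x hx g)
  simpa using h hn

/-- The solubilizer of an element `x`: all `g` such that `⟨x, g⟩` is soluble. -/
def solubilizer {G : Type*} [Group G] (x : G) : Set G :=
  {g : G | IsSolvable (Subgroup.closure ({x, g} : Set G))}

/-- The solubility graph: vertices are elements outside the soluble radical,
two distinct vertices adjacent iff they generate a soluble subgroup. -/
def solGraph (G : Type*) [Group G] : SimpleGraph {x : G // x ∉ solRadical G} where
  Adj a b := a ≠ b ∧ IsSolvable (Subgroup.closure ({a.1, b.1} : Set G))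
  symm := ⟨by rintro a b ⟨hne, hs⟩; exact ⟨hne.symm, by rwa [Set.pair_comm]⟩⟩
  loopless := ⟨by rintro a ⟨h, -⟩; exact h rfl⟩

noncomputable instance {G : Type*} [Group G] [Fintype G] :
    Fintype {x : G // x ∉ solRadical G} := Fintype.ofFinite _

/-- The degree of `x` in the solubility graph (as the number of its neighbours). -/
noncomputable def solDeg (G : Type*) [Group G] (x : G) : ℕ :=
  {g : G | g ∉ solRadical G ∧ g ≠ x ∧
    IsSolvable (Subgroup.closure ({x, g} : Set G))}.ncard

/-- The number of edges of the solubility graph. -/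
noncomputable def solEdges (G : Type*) [Group G] : ℕ :=
  (solGraph G).edgeSet.ncard

/-- The solubility degree of a finite group. -/
noncomputable def Ps (G : Type*) [Group G] : ℚ :=
  (Nat.card {p : G × G // IsSolvable (Subgroup.closure ({p.1, p.2} : Set G))} : ℚ) /
    (Nat.card G : ℚ) ^ 2

open Subgroup

section Helpers
variable {G : Type*} [Group G] {Q : Type*} [Group Q]

lemma mySolvable_of_mulEquiv {H : Type*} [Group H] (e : G ≃* H) [Group.IsSolvable G] : Group.IsSolvable H :=
  solvable_of_surjective (f := e.toMonoidHom) e.surjective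

lemma mySolvable_of_le {H K : Subgroup G} [Group.IsSolvable K] (h : H ≤ K) : Group.IsSolvable H :=
  mySolvable_of_mulEquiv (Subgroup.subgroupOfEquivOfLe h)

lemma mySolvable_map (f : G →* Q) (H : Subgroup G) [Group.IsSolvable H] : Group.IsSolvable (H.map f) :=
  solvable_of_surjective (f.subgroupMap_surjective H)

lemma mySolvable_comap (f : G →* Q) (H : Subgroup Q) [hk : Group.IsSolvable f.ker]
    [Group.IsSolvable H] : Group.IsSolvable (H.comap f) := by
  set K := H.comap f
  have hker : f.ker ≤ K := fun g hg => by
    simp only [K, Subgroup.mem_comap, MonoidHom.mem_ker.mp hg, one_mem]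
  haveI : Group.IsSolvable (f.ker.subgroupOf K) :=
    mySolvable_of_mulEquiv (Subgroup.subgroupOfEquivOfLe hker).symm
  refine solvable_of_ker_le_range ((f.ker.subgroupOf K).subtype)
    ((f.domRestrict K).codRestrict H (fun k => k.2)) ?_
  intro k hk
  have : f k.1 = 1 := congrArg Subtype.val (MonoidHom.mem_ker.mp hk)
  exact ⟨⟨k, by simpa [Subgroup.mem_subgroupOf, MonoidHom.mem_ker] using this⟩, rfl⟩

lemma mySolvable_sup (H N : Subgroup G) [N.Normal] [Group.IsSolvable H] [Group.IsSolvable N] :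
    Group.IsSolvable ↥(H ⊔ N) := by
  have h1 : H ⊔ N = (H.map (QuotientGroup.mk' N)).comap (QuotientGroup.mk' N) := by
    rw [Subgroup.comap_map_eq, QuotientGroup.ker_mk']
  haveI : Group.IsSolvable ((QuotientGroup.mk' N).ker) := by
    rw [QuotientGroup.ker_mk']; infer_instance
  haveI := mySolvable_map (QuotientGroup.mk' N) H
  rw [h1]
  exact mySolvable_comap _ _

end Helpers

lemma solRadical_isSolvable (G : Type*) [Group G] [Fintype G] :
    Group.IsSolvable (solRadical G) := by
  classical
  set S : Set (Subgroup G) := {N | N.Normal ∧ Group.IsSolvable N} with hS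
  haveI : Finite (Subgroup G) :=
    Finite.of_injective (fun H : Subgroup G => (H : Set G)) SetLike.coe_injective
  have hbot : (⊥ : Subgroup G) ∈ S := ⟨inferInstance, inferInstance⟩
  have hsup : ∀ a ∈ S, ∀ b ∈ S, a ⊔ b ∈ S := by
    rintro a ⟨han, has⟩ b ⟨hbn, hbs⟩
    haveI := han; haveI := hbn; haveI := has; haveI := hbs
    exact ⟨Subgroup.sup_normal a b, mySolvable_sup a b⟩
  have hfin : S.Finite := Set.toFinite S
  have hne : hfin.toFinset.Nonempty := ⟨⊥, hfin.mem_toFinset.mpr hbot⟩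
  have hmem : sSup S ∈ S := by
    have h2 : hfin.toFinset.sup' hne id ∈ S :=
      Finset.sup'_mem S hsup hfin.toFinset hne id (fun i hi => hfin.mem_toFinset.mp hi)
    rwa [Finset.sup'_eq_sup, Finset.sup_id_eq_sSup, hfin.coe_toFinset] at h2
  exact hmem.2

lemma zpowers_solvable {G : Type*} [Group G] (g : G) :
    Group.IsSolvable (Subgroup.zpowers g) := by
  apply isSolvable_of_comm
  rintro ⟨a, ha⟩ ⟨b, hb⟩
  obtain ⟨k, rfl⟩ := Subgroup.mem_zpowers_iff.mp ha
  obtain ⟨l, rfl⟩ := Subgroup.mem_zpowers_iff.mp hb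
  ext
  push_cast
  rw [← zpow_add, ← zpow_add, add_comm]

lemma pair_solvable_of_mem_zpowers {G : Type*} [Group G] {g a b : G}
    (ha : a ∈ Subgroup.zpowers g) (hb : b ∈ Subgroup.zpowers g) :
    Group.IsSolvable (Subgroup.closure ({a, b} : Set G)) := by
  haveI := zpowers_solvable g
  apply mySolvable_of_le (K := Subgroup.zpowers g)
  rw [Subgroup.closure_le]
  rintro x (rfl | rfl) <;> assumption


lemma solvable_closure_of_involutions {G : Type*} [Group G] {a b : G}
    (ha : a * a = 1) (hb : b * b = 1) :
    Group.IsSolvable (Subgroup.closure ({a, b} : Set G)) := by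
  have ha' : a⁻¹ = a := inv_eq_of_mul_eq_one_right ha
  have hb' : b⁻¹ = b := inv_eq_of_mul_eq_one_right hb
  set c := a * b with hc
  have h1 : a * c * a⁻¹ = c⁻¹ := by
    rw [hc, mul_inv_rev, ha', hb']
    calc a * (a * b) * a = a * a * (b * a) := by group
      _ = b * a := by rw [ha, one_mul]
  have hk : ∀ k : ℤ, a * c ^ k * a⁻¹ = c ^ (-k) := fun k => by
    rw [← conj_zpow, h1, inv_zpow, zpow_neg]
  have hca : ∀ k : ℤ, c ^ k * a = a * c ^ (-k) := fun k => by
    have := hk (-k); rw [neg_neg] at this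
    rw [← this]; group
  let M : Subgroup G :=
  { carrier := {g | ∃ k : ℤ, g = c ^ k ∨ g = a * c ^ k}
    one_mem' := ⟨0, Or.inl (by simp)⟩
    mul_mem' := by
      rintro x y ⟨k, hx | hx⟩ ⟨l, hy | hy⟩ <;> subst hx hy
      · exact ⟨k + l, Or.inl (zpow_add c k l).symm⟩
      · refine ⟨-k + l, Or.inr ?_⟩
        rw [← mul_assoc, hca k, zpow_add, mul_assoc]
      · exact ⟨k + l, Or.inr (by rw [zpow_add, mul_assoc])⟩
      · refine ⟨-k + l, Or.inl ?_⟩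
        calc a * c ^ k * (a * c ^ l) = a * (c ^ k * a) * c ^ l := by group
          _ = a * (a * c ^ (-k)) * c ^ l := by rw [hca k]
          _ = c ^ (-k) * c ^ l := by rw [← mul_assoc, ha, one_mul]
          _ = c ^ (-k + l) := (zpow_add c (-k) l).symm
    inv_mem' := by
      rintro x ⟨k, hx | hx⟩ <;> subst hx
      · exact ⟨-k, Or.inl (by rw [zpow_neg])⟩
      · refine ⟨k, Or.inr ?_⟩
        rw [mul_inv_rev, ha', ← zpow_neg, hca (-k), neg_neg] }
  have haM : a ∈ M := ⟨0, Or.inr (by simp)⟩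
  have hcM : ∀ k : ℤ, c ^ k ∈ M := fun k => ⟨k, Or.inl rfl⟩
  have hbM : b ∈ M := by
    have : b = a * c ^ (1 : ℤ) := by rw [zpow_one, hc, ← mul_assoc, ha, one_mul]
    exact ⟨1, Or.inr this⟩
  have hle : Subgroup.closure ({a, b} : Set G) ≤ M := by
    rw [Subgroup.closure_le]
    rintro g (rfl | rfl) <;> assumption
  have hzle : Subgroup.zpowers c ≤ M := fun g hg => by
    obtain ⟨k, rfl⟩ := Subgroup.mem_zpowers_iff.mp hg
    exact hcM k
  letI N : Subgroup M := (Subgroup.zpowers c).subgroupOf M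
  haveI hNsolv : Group.IsSolvable N :=
    haveI := zpowers_solvable c
    mySolvable_of_mulEquiv (Subgroup.subgroupOfEquivOfLe hzle).symm
  haveI hNnorm : N.Normal := by
    constructor
    rintro ⟨n, hnM⟩ hnN ⟨g, hgM⟩
    rw [Subgroup.mem_subgroupOf] at hnN ⊢
    obtain ⟨j, rfl⟩ := Subgroup.mem_zpowers_iff.mp hnN
    obtain ⟨k, hg | hg⟩ := hgM <;> subst hg <;> push_cast
    · have : c ^ k * c ^ j * (c ^ k)⁻¹ = c ^ j := by group
      rw [this]; exact Subgroup.zpow_mem _ (Subgroup.mem_zpowers c) j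
    · have : a * c ^ k * c ^ j * (a * c ^ k)⁻¹ = a * c ^ j * a⁻¹ := by group
      rw [this, hk j]
      exact Subgroup.zpow_mem _ (Subgroup.mem_zpowers c) (-j)
  haveI hQcomm : Group.IsSolvable (M ⧸ N) := by
    apply isSolvable_of_comm
    have key : ∀ m : M, (QuotientGroup.mk m : M ⧸ N) = 1 ∨
        (QuotientGroup.mk m : M ⧸ N) = QuotientGroup.mk ⟨a, haM⟩ := by
      rintro ⟨m, k, hm | hm⟩ <;> subst hm
      · exact Or.inl ((QuotientGroup.eq_one_iff _).mpr
          (Subgroup.mem_subgroupOf.mpr (Subgroup.zpow_mem _ (Subgroup.mem_zpowers c) k)))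
      · refine Or.inr (QuotientGroup.eq.mpr ?_)
        rw [Subgroup.mem_subgroupOf]
        show ((⟨a * c ^ k, _⟩ : M)⁻¹ * ⟨a, haM⟩ : M).1 ∈ Subgroup.zpowers c
        show (a * c ^ k)⁻¹ * a ∈ Subgroup.zpowers c
        have : (a * c ^ k)⁻¹ * a = c ^ (-k) := by
          rw [mul_inv_rev, ha', ← zpow_neg, mul_assoc, ha, mul_one]
        rw [this]; exact Subgroup.zpow_mem _ (Subgroup.mem_zpowers c) (-k)
    intro u v
    induction u using QuotientGroup.induction_on with | H m1 =>
    induction v using QuotientGroup.induction_on with | H m2 =>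
    rcases key m1 with h1 | h1 <;> rcases key m2 with h2 | h2 <;>
      rw [h1, h2] <;> simp
  haveI : Group.IsSolvable M := by
    refine solvable_of_ker_le_range N.subtype (QuotientGroup.mk' N) ?_
    rw [QuotientGroup.ker_mk', Subgroup.range_subtype]
  exact mySolvable_of_le hle

theorem stmt5 {G : Type*} [Group G] [Fintype G] (hG : ¬ IsSolvable G)
    (x : G) (hx : x ∉ solRadical G) (p : ℕ) (hp : p.Prime)
    (hdeg : solDeg G x = p - 1) :
    solRadical G = ⊥ := by
  classical
  set R := solRadical G with hR
  haveI : Group.IsSolvable R := solRadical_isSolvable G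
  haveI : Group.IsSolvable ((QuotientGroup.mk' R).ker) := by
    rw [QuotientGroup.ker_mk']; infer_instance
  -- the key equivalence between solubility upstairs and downstairs
  have hiff : ∀ g : G, Group.IsSolvable (Subgroup.closure ({x, g} : Set G)) ↔
      Group.IsSolvable (Subgroup.closure ({(x : G ⧸ R), (g : G ⧸ R)} : Set (G ⧸ R))) := by
    intro g
    constructor
    · intro h
      have : Subgroup.closure ({(x : G ⧸ R), (g : G ⧸ R)} : Set (G ⧸ R)) =
          (Subgroup.closure ({x, g} : Set G)).map (QuotientGroup.mk' R) := by
        rw [MonoidHom.map_closure, Set.image_pair]; rfl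
      rw [this]
      exact mySolvable_map _ _
    · intro h
      have hle : Subgroup.closure ({x, g} : Set G) ≤
          (Subgroup.closure ({(x : G ⧸ R), (g : G ⧸ R)} : Set (G ⧸ R))).comap
            (QuotientGroup.mk' R) := by
        rw [Subgroup.closure_le]
        rintro y (rfl | rfl) <;>
          exact Subgroup.subset_closure (by simp)
      haveI := mySolvable_comap (QuotientGroup.mk' R)
        (Subgroup.closure ({(x : G ⧸ R), (g : G ⧸ R)} : Set (G ⧸ R)))
      exact mySolvable_of_le hle
  set T : Set (G ⧸ R) := {q | Group.IsSolvable (Subgroup.closure ({(x : G ⧸ R), q} : Set (G ⧸ R)))}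
    with hT
  set Sol : Set G := {g | Group.IsSolvable (Subgroup.closure ({x, g} : Set G))} with hSol
  have hpre : (QuotientGroup.mk : G → G ⧸ R) ⁻¹' T = Sol := by
    ext g; exact (hiff g).symm
  -- counting
  haveI : Finite (G ⧸ R) := Quotient.finite _
  have hcardSol : Nat.card Sol = Nat.card R * Nat.card T := by
    rw [← hpre, Nat.card_congr (QuotientGroup.preimageMkEquivSubgroupProdSet R T),
      Nat.card_prod]
  -- decompose Sol
  set A : Set G := {g | g ∉ solRadical G ∧ g ≠ x ∧
      Group.IsSolvable (Subgroup.closure ({x, g} : Set G))} with hA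
  have hsplit : Sol = A ∪ ((R : Set G) ∪ {x}) := by
    ext g
    constructor
    · intro hg
      by_cases h1 : g ∈ R
      · exact Or.inr (Or.inl h1)
      by_cases h2 : g = x
      · exact Or.inr (Or.inr (by simp [h2]))
      · exact Or.inl ⟨h1, h2, hg⟩
    · rintro (⟨-, -, hg⟩ | hg | hg)
      · exact hg
      · show Group.IsSolvable _
        rw [hiff g]
        have : (g : G ⧸ R) = 1 := (QuotientGroup.eq_one_iff g).mpr hg
        rw [this]
        exact pair_solvable_of_mem_zpowers (Subgroup.mem_zpowers _) (Subgroup.one_mem _)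
      · rw [Set.mem_singleton_iff] at hg
        subst hg
        show Group.IsSolvable _
        exact pair_solvable_of_mem_zpowers (g := g)
          (Subgroup.mem_zpowers _) (Subgroup.mem_zpowers _)
  have hdisj : Disjoint A ((R : Set G) ∪ {x}) := by
    rw [Set.disjoint_union_right]
    constructor
    · rw [Set.disjoint_left]; rintro g ⟨h1, -, -⟩ h2; exact h1 h2
    · rw [Set.disjoint_left]; rintro g ⟨-, h1, -⟩ h2
      exact h1 (by simpa using h2)
  have hdisj2 : Disjoint (R : Set G) ({x} : Set G) := by
    rw [Set.disjoint_left]; intro g h1 h2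
    rw [Set.mem_singleton_iff] at h2; subst h2; exact hx h1
  have hcard2 : Sol.ncard = A.ncard + ((R : Set G).ncard + 1) := by
    rw [hsplit, Set.ncard_union_eq hdisj (Set.toFinite _) (Set.toFinite _),
      Set.ncard_union_eq hdisj2 (Set.toFinite _) (Set.toFinite _), Set.ncard_singleton]
  have hrA : A.ncard = p - 1 := hdeg
  have hRcard : (R : Set G).ncard = Nat.card R := (Nat.card_coe_set_eq _).symm
  have hSolcard : Sol.ncard = Nat.card Sol := (Nat.card_coe_set_eq _).symm
  have hTcard : T.ncard = Nat.card T := (Nat.card_coe_set_eq _).symm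
  have hppos : 1 ≤ p := hp.one_lt.le.trans' (by norm_num)
  have hrpos : 0 < Nat.card R := Nat.card_pos
  have hkey : Nat.card R * Nat.card T = p + Nat.card R := by
    rw [← hcardSol, ← hSolcard, hcard2, hrA, hRcard]
    omega
  have hdvd : Nat.card R ∣ p := by
    have h1 : Nat.card R ∣ p + Nat.card R := hkey ▸ Dvd.intro _ rfl
    have h2 := Nat.dvd_sub h1 (dvd_refl (Nat.card R))
    simpa using h2
  rcases (Nat.Prime.eq_one_or_self_of_dvd hp _ hdvd) with h1 | h1
  · exact Subgroup.eq_bot_of_card_eq R h1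
  · -- |R| = p, derive contradiction
    exfalso
    have hnT : Nat.card T = 2 := by
      have := hkey
      rw [h1] at this
      have h2 : p * Nat.card T = p * 2 := by omega
      exact Nat.eq_of_mul_eq_mul_left hp.pos h2
    -- T contains 1 and x̄
    set xb : G ⧸ R := (x : G ⧸ R) with hxb
    have hx1 : xb ≠ 1 := fun h => hx ((QuotientGroup.eq_one_iff x).mp h)
    have h1T : (1 : G ⧸ R) ∈ T :=
      pair_solvable_of_mem_zpowers (g := xb) (Subgroup.mem_zpowers _) (Subgroup.one_mem _)
    have hxT : xb ∈ T :=
      pair_solvable_of_mem_zpowers (g := xb) (Subgroup.mem_zpowers _) (Subgroup.mem_zpowers _)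
    -- find a third element of T
    have hthird : ∃ y : G ⧸ R, y ∈ T ∧ y ≠ 1 ∧ y ≠ xb := by
      by_cases hsq : xb * xb = 1
      · by_cases hcen : ∀ g : G ⧸ R, g * xb = xb * g
        · -- xb is central, so its preimage is a normal soluble subgroup not inside R
          exfalso
          haveI hnorm : (Subgroup.zpowers xb).Normal := by
            constructor
            intro n hn g
            obtain ⟨k, rfl⟩ := Subgroup.mem_zpowers_iff.mp hn
            have hcomm : Commute xb g := (hcen g).symm
            have : g * xb ^ k * g⁻¹ = xb ^ k := by
              rw [← (hcomm.zpow_left k).eq]; group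
            rw [this]
            exact Subgroup.zpow_mem _ (Subgroup.mem_zpowers _) k
          haveI := zpowers_solvable xb
          haveI := mySolvable_comap (QuotientGroup.mk' R) (Subgroup.zpowers xb)
          haveI : ((Subgroup.zpowers xb).comap (QuotientGroup.mk' R)).Normal :=
            Subgroup.Normal.comap hnorm _
          have hle2 : (Subgroup.zpowers xb).comap (QuotientGroup.mk' R) ≤ solRadical G :=
            le_sSup ⟨inferInstance,
              (show Group.IsSolvable ((Subgroup.zpowers xb).comap (QuotientGroup.mk' R)) from inferInstance)⟩
          exact hx (hle2 (Subgroup.mem_comap.mpr (Subgroup.mem_zpowers _)))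
        · push_neg at hcen
          obtain ⟨g, hg⟩ := hcen
          refine ⟨g * xb * g⁻¹, ?_, ?_, ?_⟩
          · show Group.IsSolvable _
            have hy2 : (g * xb * g⁻¹) * (g * xb * g⁻¹) = 1 := by
              have : (g * xb * g⁻¹) * (g * xb * g⁻¹) = g * (xb * xb) * g⁻¹ := by group
              rw [this, hsq]; group
            exact solvable_closure_of_involutions hsq hy2
          · intro h
            apply hx1
            have := congrArg (fun z => g⁻¹ * z * g) h
            simpa [mul_assoc] using this
          · intro h
            apply hg
            have := congrArg (fun z => z * g) h
            simp only [inv_mul_cancel_right] at this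
            rw [this]
      · refine ⟨xb⁻¹, ?_, ?_, ?_⟩
        · exact pair_solvable_of_mem_zpowers (g := xb) (Subgroup.mem_zpowers _)
            (Subgroup.inv_mem _ (Subgroup.mem_zpowers _))
        · simpa using hx1
        · intro h
          apply hsq
          have h2 := mul_inv_cancel xb
          rwa [h] at h2
    obtain ⟨y, hyT, hy1, hyx⟩ := hthird
    have hsub : ({(1 : G ⧸ R), xb, y} : Set (G ⧸ R)) ⊆ T := by
      rintro q (rfl | rfl | rfl) <;> assumption
    have h3 : ({(1 : G ⧸ R), xb, y} : Set (G ⧸ R)).ncard = 3 := by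
      rw [Set.ncard_insert_of_notMem (by simp [hx1.symm, hy1.symm]) (Set.toFinite _),
        Set.ncard_insert_of_notMem (by simp [hyx.symm]) (Set.toFinite _),
        Set.ncard_singleton]
    have hle3 : 3 ≤ T.ncard := h3 ▸ Set.ncard_le_ncard hsub (Set.toFinite T)
    rw [hTcard, hnT] at hle3
    omega
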